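/- For every deterministic program M, max_μ GE[μ](M) = max_{ℓ'} GE[U⊗ℓ̇'](M), where the maximum on the left is over all probability distributions μ on ℍ × 𝕃, and U⊗ℓ̇' denotes the distribution λ(h,ℓ). if ℓ = ℓ' then U(h) else 0, with U the uniform distribution on ℍ. -/

import Mathlib

/-!
Statement 7: For every deterministic program `M : ℍ × 𝕃 → 𝕆`,
`max_μ GE[μ](M) = max_{ℓ'} GE[U ⊗ ℓ̇'](M)`, where the maximum on the left is
over all probability distributions `μ` on `ℍ × 𝕃` and
`U ⊗ ℓ̇' = λ(h,ℓ). if ℓ = ℓ' then U(h) else 0` with `U` uniform on `ℍ`.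
-/

/-- Guessing entropy of a (sub)distribution `p` on a finite type `X`:
`𝓖(p) = Σ_{1≤i≤m} i · p(x_i)` with `x_1, …, x_m` sorted so that
`p(x_i) ≥ p(x_j)` whenever `i ≤ j`. -/
noncomputable def guess {X : Type*} [Fintype X] (p : X → ℝ) : ℝ :=
  ∑ i : Fin (Fintype.card X), ((i : ℕ) + 1 : ℝ) *
    p ((Fintype.equivFin X).symm
      (Tuple.sort (fun j => -p ((Fintype.equivFin X).symm j)) i))

variable {Hi Li Oi : Type*}

/-- Marginal probability `μ(L = ℓ)`. -/
noncomputable def pL [Fintype Hi] (μ : Hi × Li → ℝ) (ℓ : Li) : ℝ := ∑ h, μ (h, ℓ)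

/-- Joint probability `μ(O = o, L = ℓ)` where `O = M(H,L)`. -/
noncomputable def pOL [Fintype Hi] [DecidableEq Oi] (M : Hi × Li → Oi) (μ : Hi × Li → ℝ)
    (o : Oi) (ℓ : Li) : ℝ := ∑ h, if M (h, ℓ) = o then μ (h, ℓ) else 0

/-- Conditional guessing entropy `𝓖[μ](H|L)`. -/
noncomputable def condGuessHL [Fintype Hi] [Fintype Li] (μ : Hi × Li → ℝ) : ℝ :=
  ∑ ℓ : Li, pL μ ℓ * guess (fun h : Hi => μ (h, ℓ) / pL μ ℓ)

/-- Conditional guessing entropy `𝓖[μ](H|O,L)` where `O = M(H,L)`. -/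
noncomputable def condGuessHOL [Fintype Hi] [Fintype Li] [Fintype Oi] [DecidableEq Oi]
    (M : Hi × Li → Oi) (μ : Hi × Li → ℝ) : ℝ :=
  ∑ ℓ : Li, ∑ o : Oi, pOL M μ o ℓ *
    guess (fun h : Hi => (if M (h, ℓ) = o then μ (h, ℓ) else 0) / pOL M μ o ℓ)

/-- Guessing-entropy-based QIF `GE[μ](M) = 𝓖[μ](H|L) − 𝓖[μ](H|O,L)`. -/
noncomputable def GE [Fintype Hi] [Fintype Li] [Fintype Oi] [DecidableEq Oi]
    (M : Hi × Li → Oi) (μ : Hi × Li → ℝ) : ℝ :=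
  condGuessHL μ - condGuessHOL M μ

/-- `U ⊗ ℓ̇'`: the distribution `λ(h,ℓ). if ℓ = ℓ' then U(h) else 0`
with `U` the uniform distribution on `ℍ`. -/
noncomputable def unifAt [Fintype Hi] [DecidableEq Li] (ℓ' : Li) : Hi × Li → ℝ :=
  fun p => if p.2 = ℓ' then (Fintype.card Hi : ℝ)⁻¹ else 0

/-! ### Auxiliary lemmas -/

open Finset

section Aux

lemma count_lt (n : ℕ) (j : Fin n) :
    ∑ i : Fin n, (if i < j then (1:ℝ) else 0) = (j : ℕ) := by
  simp only [Fin.lt_def]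
  rw [Fin.sum_univ_eq_sum_range (fun m => if m < (j:ℕ) then (1:ℝ) else 0) n]
  rw [Finset.sum_ite, Finset.sum_const_zero, Finset.sum_const, add_zero]
  have : (Finset.range n).filter (fun m => m < (j:ℕ)) = Finset.range (j:ℕ) := by
    ext m; simp only [mem_filter, mem_range]; omega
  rw [this, Finset.card_range]
  simp

lemma count_le (n k : ℕ) (hk : k < n) :
    ∑ i : Fin n, (if (i:ℕ) ≤ k then (1:ℝ) else 0) = (k:ℝ) + 1 := by
  rw [Fin.sum_univ_eq_sum_range (fun m => if m ≤ k then (1:ℝ) else 0) n]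
  rw [Finset.sum_ite, Finset.sum_const_zero, Finset.sum_const, add_zero]
  have : (Finset.range n).filter (fun m => m ≤ k) = Finset.range (k+1) := by
    ext m; simp only [mem_filter, mem_range]; omega
  rw [this, Finset.card_range]
  push_cast
  ring

lemma antitone_weighted (n : ℕ) (r : Fin n → ℝ) (hr : Antitone r) :
    ∑ i : Fin n, ((i:ℕ)+1:ℝ) * r i
      = (∑ i : Fin n, r i) + 2⁻¹ * ∑ i : Fin n, ∑ j : Fin n, (if i = j then 0 else min (r i) (r j)) := by
  have key : ∀ i j : Fin n, (if i = j then (0:ℝ) else min (r i) (r j))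
      = (if i < j then r j else 0) + (if j < i then r i else 0) := by
    intro i j
    rcases lt_trichotomy i j with h | h | h
    · rw [if_neg h.ne, if_pos h, if_neg (not_lt_of_gt h), add_zero,
        min_eq_right (hr h.le)]
    · simp [h]
    · rw [if_neg h.ne', if_neg (not_lt_of_gt h), if_pos h, zero_add,
        min_eq_left (hr h.le)]
  have hcount : ∀ j : Fin n, ∑ i : Fin n, (if i < j then r j else 0)
      = ((j:ℕ):ℝ) * r j := by
    intro j
    have h2 : ∀ i : Fin n, (if i < j then r j else 0) = (if i < j then (1:ℝ) else 0) * r j := by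
      intro i; split <;> simp
    simp only [h2]
    rw [← Finset.sum_mul, count_lt]
  have h1 : ∑ i : Fin n, ∑ j : Fin n, (if i = j then (0:ℝ) else min (r i) (r j))
      = 2 * ∑ j : Fin n, ((j:ℕ):ℝ) * r j := by
    simp only [key, Finset.sum_add_distrib]
    rw [Finset.sum_comm (f := fun i j => if i < j then r j else 0)]
    simp only [hcount]
    ring
  rw [h1]
  have h3 : ∀ i : Fin n, ((i:ℕ)+1:ℝ) * r i = r i + ((i:ℕ):ℝ) * r i := by intro i; ring
  simp only [h3, Finset.sum_add_distrib]
  ring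

lemma guess_eq {X : Type*} [Fintype X] [DecidableEq X] (p : X → ℝ) :
    guess p = (∑ x, p x)
      + 2⁻¹ * ∑ x : X, ∑ y : X, (if x = y then 0 else min (p x) (p y)) := by
  set e : Fin (Fintype.card X) ≃ X :=
    (Tuple.sort fun j => -p ((Fintype.equivFin X).symm j)).trans
      (Fintype.equivFin X).symm with he
  have hanti : Antitone (p ∘ e) := by
    intro a b hab
    have h := Tuple.monotone_sort (fun j => -p ((Fintype.equivFin X).symm j)) hab
    simp only [Function.comp_apply] at h ⊢
    have : -p (e a) ≤ -p (e b) := h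
    linarith
  have hg : guess p = ∑ i : Fin (Fintype.card X), ((i:ℕ)+1:ℝ) * (p ∘ e) i := rfl
  rw [hg, antitone_weighted _ _ hanti]
  congr 1
  · exact Equiv.sum_comp e p
  · congr 1
    rw [← Equiv.sum_comp e (fun x => ∑ y : X, (if x = y then 0 else min (p x) (p y)))]
    refine Finset.sum_congr rfl fun i _ => ?_
    rw [← Equiv.sum_comp e (fun y => if e i = y then 0 else min (p (e i)) (p y))]
    refine Finset.sum_congr rfl fun j _ => ?_
    simp [Function.comp, EmbeddingLike.apply_eq_iff_eq]

lemma guess_zero {X : Type*} [Fintype X] : guess (fun _ : X => (0:ℝ)) = 0 := by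
  simp [guess]

lemma guess_div {X : Type*} [Fintype X] [DecidableEq X] (p : X → ℝ) (c : ℝ)
    (hp : ∀ x, 0 ≤ p x) (hs : ∑ x, p x = c) :
    c * guess (fun x => p x / c) = guess p := by
  rcases eq_or_lt_of_le (show (0:ℝ) ≤ c by rw [← hs]; exact Finset.sum_nonneg fun x _ => hp x)
    with hc | hc
  · have hz : ∀ x, p x = 0 := by
      intro x
      have := (Finset.sum_eq_zero_iff_of_nonneg (fun x _ => hp x)).1 (hs.trans hc.symm)
      exact this x (mem_univ x)
    have : p = fun _ => (0:ℝ) := funext hz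
    rw [this, ← hc, guess_zero, zero_mul]
  · rw [guess_eq, guess_eq p]
    have hmin : ∀ x y : X, (if x = y then (0:ℝ) else min (p x / c) (p y / c))
        = (if x = y then 0 else min (p x) (p y)) / c := by
      intro x y
      rw [min_div_div_right hc.le]
      split <;> simp
    simp only [hmin]
    simp only [div_eq_mul_inv, ← Finset.sum_mul]
    have hc' : c ≠ 0 := hc.ne'
    field_simp

lemma GE_eq [Fintype Hi] [Fintype Li] [Fintype Oi] [DecidableEq Oi]
    (M : Hi × Li → Oi) (μ : Hi × Li → ℝ) (hμ : ∀ a, 0 ≤ μ a) :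
    GE M μ = ∑ ℓ : Li, 2⁻¹ * ∑ x : Hi, ∑ y : Hi,
      (if M (x,ℓ) ≠ M (y,ℓ) then min (μ (x,ℓ)) (μ (y,ℓ)) else 0) := by
  classical
  have hHL : condGuessHL μ = ∑ ℓ : Li, guess (fun h : Hi => μ (h, ℓ)) := by
    unfold condGuessHL
    exact Finset.sum_congr rfl fun ℓ _ => guess_div _ _ (fun h => hμ _) rfl
  have hHOL : condGuessHOL M μ = ∑ ℓ : Li, ∑ o : Oi,
      guess (fun h : Hi => if M (h, ℓ) = o then μ (h, ℓ) else 0) := by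
    unfold condGuessHOL
    refine Finset.sum_congr rfl fun ℓ _ => Finset.sum_congr rfl fun o _ => ?_
    refine guess_div _ _ (fun h => ?_) rfl
    split
    · exact hμ _
    · exact le_refl _
  rw [GE, hHL, hHOL, ← Finset.sum_sub_distrib]
  refine Finset.sum_congr rfl fun ℓ _ => ?_
  have hA : ∑ o : Oi, ∑ h : Hi, (if M (h,ℓ) = o then μ (h,ℓ) else 0) = ∑ h : Hi, μ (h,ℓ) := by
    rw [Finset.sum_comm]
    refine Finset.sum_congr rfl fun h _ => ?_
    simp
  have hB : ∀ x y : Hi, ∑ o : Oi, (if x = y then (0:ℝ) else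
      min (if M (x,ℓ) = o then μ (x,ℓ) else 0) (if M (y,ℓ) = o then μ (y,ℓ) else 0))
      = if x = y then 0 else if M (x,ℓ) = M (y,ℓ) then min (μ (x,ℓ)) (μ (y,ℓ)) else 0 := by
    intro x y
    by_cases hxy : x = y
    · simp [hxy]
    · simp only [if_neg hxy]
      have h0 : ∀ o : Oi, min (if M (x,ℓ) = o then μ (x,ℓ) else 0) (if M (y,ℓ) = o then μ (y,ℓ) else 0)
          = if M (x,ℓ) = o ∧ M (y,ℓ) = o then min (μ (x,ℓ)) (μ (y,ℓ)) else 0 := by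
        intro o
        by_cases h1 : M (x,ℓ) = o <;> by_cases h2 : M (y,ℓ) = o <;>
          simp [h1, h2, min_eq_right (hμ (x,ℓ)), min_eq_left (hμ (y,ℓ))]
      simp only [h0]
      by_cases hM : M (x,ℓ) = M (y,ℓ)
      · rw [if_pos hM, hM]
        simp
      · rw [if_neg hM]
        refine Finset.sum_eq_zero fun o _ => ?_
        rw [if_neg]
        rintro ⟨h1, h2⟩
        exact hM (h1.trans h2.symm)
  have hC : ∑ o : Oi, guess (fun h : Hi => if M (h,ℓ) = o then μ (h,ℓ) else 0)
      = (∑ h : Hi, μ (h,ℓ)) + 2⁻¹ * ∑ x : Hi, ∑ y : Hi,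
        (if x = y then 0 else if M (x,ℓ) = M (y,ℓ) then min (μ (x,ℓ)) (μ (y,ℓ)) else 0) := by
    simp only [guess_eq]
    rw [Finset.sum_add_distrib, hA, ← Finset.mul_sum]
    congr 1
    rw [Finset.sum_comm]
    refine congrArg _ (Finset.sum_congr rfl fun x _ => ?_)
    rw [Finset.sum_comm]
    exact Finset.sum_congr rfl fun y _ => hB x y
  have hD : ∀ x y : Hi, (if x = y then (0:ℝ) else min (μ (x,ℓ)) (μ (y,ℓ)))
      - (if x = y then 0 else if M (x,ℓ) = M (y,ℓ) then min (μ (x,ℓ)) (μ (y,ℓ)) else 0)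
      = if M (x,ℓ) ≠ M (y,ℓ) then min (μ (x,ℓ)) (μ (y,ℓ)) else 0 := by
    intro x y
    by_cases hxy : x = y
    · subst hxy; simp
    · by_cases hM : M (x,ℓ) = M (y,ℓ) <;> simp [hxy, hM]
  have hE : (∑ x : Hi, ∑ y : Hi, (if x = y then (0:ℝ) else min (μ (x,ℓ)) (μ (y,ℓ))))
      - (∑ x : Hi, ∑ y : Hi, (if x = y then (0:ℝ) else if M (x,ℓ) = M (y,ℓ) then min (μ (x,ℓ)) (μ (y,ℓ)) else 0))
      = ∑ x : Hi, ∑ y : Hi, (if M (x,ℓ) ≠ M (y,ℓ) then min (μ (x,ℓ)) (μ (y,ℓ)) else 0) := by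
    rw [← Finset.sum_sub_distrib]
    refine Finset.sum_congr rfl fun x _ => ?_
    rw [← Finset.sum_sub_distrib]
    exact Finset.sum_congr rfl fun y _ => hD x y
  rw [guess_eq (fun h : Hi => μ (h,ℓ)), hC]
  linarith [hE]

end Aux

section Core

lemma sum_offDiag_insert {O : Type*} [DecidableEq O] {x : O} {s : Finset O}
    (hx : x ∉ s) (f : O × O → ℝ) :
    ∑ p ∈ (insert x s).offDiag, f p
      = ∑ p ∈ s.offDiag, f p + ∑ b ∈ s, f (x, b) + ∑ a ∈ s, f (a, x) := by
  rw [Finset.offDiag_insert hx]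
  have d1 : Disjoint (s.offDiag) ({x} ×ˢ s) := by
    rw [Finset.disjoint_left]
    rintro ⟨a, b⟩ h1 h2
    rw [Finset.mem_offDiag] at h1
    rw [Finset.mem_product, Finset.mem_singleton] at h2
    exact hx (h2.1 ▸ h1.1)
  have d2 : Disjoint (s.offDiag ∪ {x} ×ˢ s) (s ×ˢ {x}) := by
    rw [Finset.disjoint_left]
    rintro ⟨a, b⟩ h1 h2
    rw [Finset.mem_product, Finset.mem_singleton] at h2
    rcases Finset.mem_union.1 h1 with h | h
    · rw [Finset.mem_offDiag] at h
      exact hx (h2.2 ▸ h.2.1)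
    · rw [Finset.mem_product, Finset.mem_singleton] at h
      exact hx (h2.2 ▸ h.2)
  rw [Finset.sum_union d2, Finset.sum_union d1]
  congr 1
  · congr 1
    rw [Finset.sum_product]
    simp
  · rw [Finset.sum_product]
    simp

lemma multipartite_ind {O : Type*} [DecidableEq O] (s : Finset O) (aa nn : O → ℝ)
    (h0 : ∀ o, 0 ≤ aa o) (h1 : ∀ o, aa o ≤ nn o) :
    (∑ o ∈ s, nn o) * (∑ p ∈ s.offDiag, aa p.1 * aa p.2)
      ≤ (∑ o ∈ s, aa o) * (∑ p ∈ s.offDiag, nn p.1 * nn p.2) := by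
  classical
  induction s using Finset.induction_on with
  | empty => simp
  | @insert x s hx ih =>
    have hn0 : ∀ o, 0 ≤ nn o := fun o => (h0 o).trans (h1 o)
    set A := ∑ o ∈ s, aa o with hA
    set N := ∑ o ∈ s, nn o with hN
    set P := ∑ p ∈ s.offDiag, aa p.1 * aa p.2 with hP
    set Q := ∑ p ∈ s.offDiag, nn p.1 * nn p.2 with hQ
    have hA0 : 0 ≤ A := Finset.sum_nonneg fun o _ => h0 o
    have hAN : A ≤ N := Finset.sum_le_sum fun o _ => h1 o
    have hP0 : 0 ≤ P := Finset.sum_nonneg fun p _ => mul_nonneg (h0 _) (h0 _)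
    have hPQ : P ≤ Q := Finset.sum_le_sum fun p _ =>
      mul_le_mul (h1 _) (h1 _) (h0 _) (hn0 _)
    have hPA : P ≤ A ^ 2 := by
      have : A ^ 2 = ∑ p ∈ s ×ˢ s, aa p.1 * aa p.2 := by
        rw [sq, Finset.sum_mul_sum]
        rw [Finset.sum_product]
      rw [this]
      refine Finset.sum_le_sum_of_subset_of_nonneg (fun p hp => Finset.mem_product.2
        ⟨(Finset.mem_offDiag.1 hp).1, (Finset.mem_offDiag.1 hp).2.1⟩) ?_
      exact fun p _ _ => mul_nonneg (h0 _) (h0 _)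
    rw [Finset.sum_insert hx, Finset.sum_insert hx,
      sum_offDiag_insert hx, sum_offDiag_insert hx]
    have e1 : ∑ b ∈ s, aa x * aa b = aa x * A := by rw [Finset.mul_sum]
    have e2 : ∑ a ∈ s, aa a * aa x = aa x * A := by
      rw [← Finset.sum_mul]; ring
    have e3 : ∑ b ∈ s, nn x * nn b = nn x * N := by rw [Finset.mul_sum]
    have e4 : ∑ a ∈ s, nn a * nn x = nn x * N := by
      rw [← Finset.sum_mul]; ring
    rw [e1, e2, e3, e4]
    have hax := h0 x
    have haxn := h1 x
    nlinarith [mul_nonneg (sub_nonneg.2 haxn) (sub_nonneg.2 hAN),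
      mul_nonneg hax (sub_nonneg.2 hAN),
      mul_nonneg (sub_nonneg.2 haxn) hA0,
      mul_nonneg (mul_nonneg hax (sub_nonneg.2 haxn)) (sub_nonneg.2 hAN),
      mul_nonneg (sub_nonneg.2 haxn) (sub_nonneg.2 hPA),
      mul_nonneg (sub_nonneg.2 haxn) (sub_nonneg.2 hPQ),
      mul_nonneg hax (sub_nonneg.2 hPQ),
      sq_nonneg (A - N)]

lemma cross_count_eq {n : ℕ} {O : Type*} [Fintype O] [DecidableEq O]
    (g : Fin n → O) (w : Fin n → ℝ) :
    ∑ i : Fin n, ∑ j : Fin n, (if g i ≠ g j then w i * w j else 0)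
      = ∑ p ∈ (Finset.univ : Finset O).offDiag,
          (∑ i : Fin n, if g i = p.1 then w i else 0) *
          (∑ j : Fin n, if g j = p.2 then w j else 0) := by
  have key : ∀ i j : Fin n, (if g i ≠ g j then w i * w j else 0)
      = ∑ p ∈ (Finset.univ : Finset O).offDiag,
          (if g i = p.1 then w i else 0) * (if g j = p.2 then w j else 0) := by
    intro i j
    by_cases hij : g i = g j
    · rw [if_neg (by simpa using hij)]
      refine (Finset.sum_eq_zero fun p hp => ?_).symm
      have hne := (Finset.mem_offDiag.1 hp).2.2
      by_cases h1 : g i = p.1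
      · have h2 : ¬ g j = p.2 := fun h2 => hne (h1 ▸ hij ▸ h2 ▸ rfl)
        simp [h2]
      · simp [h1]
    · rw [if_pos hij]
      rw [Finset.sum_eq_single (g i, g j)]
      · simp
      · rintro ⟨o1, o2⟩ hp hne
        by_cases h1 : g i = o1
        · by_cases h2 : g j = o2
          · exact absurd (by rw [← h1, ← h2]) hne
          · simp [h2]
        · simp [h1]
      · intro hmem
        exact absurd (Finset.mem_offDiag.2 ⟨mem_univ _, mem_univ _, hij⟩) hmem
  simp only [key]
  calc ∑ i : Fin n, ∑ j : Fin n, ∑ p ∈ (Finset.univ : Finset O).offDiag,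
          ((if g i = p.1 then w i else 0) * if g j = p.2 then w j else 0)
      = ∑ i : Fin n, ∑ p ∈ (Finset.univ : Finset O).offDiag, ∑ j : Fin n,
          ((if g i = p.1 then w i else 0) * if g j = p.2 then w j else 0) :=
        Finset.sum_congr rfl fun i _ => Finset.sum_comm
    _ = ∑ p ∈ (Finset.univ : Finset O).offDiag, ∑ i : Fin n, ∑ j : Fin n,
          ((if g i = p.1 then w i else 0) * if g j = p.2 then w j else 0) :=
        Finset.sum_comm
    _ = ∑ p ∈ (Finset.univ : Finset O).offDiag,
          (∑ i : Fin n, if g i = p.1 then w i else 0) *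
          (∑ j : Fin n, if g j = p.2 then w j else 0) := by
        refine Finset.sum_congr rfl fun p _ => ?_
        rw [Finset.sum_mul_sum]

lemma cross_min_le {H O : Type*} [Fintype H] [Fintype O] [DecidableEq O]
    (f : H → O) (q : H → ℝ) (hq : ∀ x, 0 ≤ q x) :
    ∑ x : H, ∑ y : H, (if f x ≠ f y then min (q x) (q y) else 0)
      ≤ (∑ h, q h) / (Fintype.card H) *
        ∑ x : H, ∑ y : H, (if f x ≠ f y then (1:ℝ) else 0) := by
  classical
  set n := Fintype.card H with hn
  -- sorted enumeration
  set e : Fin n ≃ H :=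
    (Tuple.sort fun j => -q ((Fintype.equivFin H).symm j)).trans
      (Fintype.equivFin H).symm with he
  set r : Fin n → ℝ := q ∘ e with hrdef
  have hanti : Antitone r := by
    intro a b hab
    have h := Tuple.monotone_sort (fun j => -q ((Fintype.equivFin H).symm j)) hab
    simp only [Function.comp_apply] at h ⊢
    have : -q (e a) ≤ -q (e b) := h
    simp only [hrdef, Function.comp_apply]
    linarith
  have hr0 : ∀ i, 0 ≤ r i := fun i => hq _
  set g : Fin n → O := f ∘ e with hgdef
  -- reindex the sums
  have reidx : ∀ F : H → H → ℝ, ∑ x : H, ∑ y : H, F x y = ∑ i : Fin n, ∑ j : Fin n, F (e i) (e j) := by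
    intro F
    rw [← Equiv.sum_comp e (fun x => ∑ y : H, F x y)]
    exact Finset.sum_congr rfl fun i _ =>
      (Equiv.sum_comp e (fun y => F (e i) y)).symm
  rw [reidx (fun x y => if f x ≠ f y then min (q x) (q y) else 0),
    reidx (fun x y => if f x ≠ f y then (1:ℝ) else 0),
    show (∑ h, q h) = ∑ i : Fin n, r i from (Equiv.sum_comp e q).symm]
  set R : ℕ → ℝ := fun m => if h : m < n then r ⟨m, h⟩ else 0 with hR
  have hRfin : ∀ i : Fin n, R (i:ℕ) = r i := by
    intro i; simp [hR, i.isLt]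
  have hRn : R n = 0 := by simp [hR]
  set d : ℕ → ℝ := fun k => R k - R (k+1) with hdd
  have hd0 : ∀ k, 0 ≤ d k := by
    intro k
    by_cases h1 : k + 1 < n
    · have h0 : k < n := by omega
      simp only [hdd, hR, dif_pos h1, dif_pos h0]
      have := hanti (show (⟨k, h0⟩ : Fin n) ≤ ⟨k+1, h1⟩ from by simp [Fin.le_def])
      linarith
    · by_cases h0 : k < n
      · simp only [hdd, hR, dif_pos h0, dif_neg h1]
        simpa using hr0 ⟨k, h0⟩
      · simp [hdd, hR, dif_neg h0, dif_neg h1]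
  have htel : ∀ m : ℕ, m < n → R m = ∑ k ∈ Finset.range n, (if m ≤ k then d k else 0) := by
    intro m hm
    rw [Finset.sum_ite, Finset.sum_const_zero, add_zero]
    have hf : (Finset.range n).filter (fun k => m ≤ k) = Finset.Ico m n := by
      ext x; simp only [mem_filter, mem_range, mem_Ico]; omega
    rw [hf]
    have h2 : ∑ k ∈ Finset.Ico m n, (R (k+1) - R k) = R n - R m := by
      rw [Finset.sum_Ico_eq_sub _ hm.le, Finset.sum_range_sub, Finset.sum_range_sub]
      ring
    have h3 : ∀ k, d k = -(R (k+1) - R k) := fun k => by simp only [hdd]; ring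
    calc R m = -(R n - R m) := by rw [hRn]; ring
      _ = ∑ k ∈ Finset.Ico m n, d k := by
          rw [← h2, ← Finset.sum_neg_distrib]
          exact Finset.sum_congr rfl fun k _ => (h3 k).symm
  have hminR : ∀ i j : Fin n, min (r i) (r j) = R (max (i:ℕ) (j:ℕ)) := by
    intro i j
    rcases le_total i j with h | h
    · rw [min_eq_right (hanti h), max_eq_right (Fin.le_def.mp h), hRfin j]
    · rw [min_eq_left (hanti h), max_eq_left (Fin.le_def.mp h), hRfin i]
  -- rewrite LHS into the triple-sum form
  have step1 : ∑ i : Fin n, ∑ j : Fin n,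
        (if f (e i) ≠ f (e j) then min (q (e i)) (q (e j)) else 0)
      = ∑ k ∈ Finset.range n, (∑ i : Fin n, ∑ j : Fin n,
          (if g i ≠ g j then (if (i:ℕ) ≤ k then (1:ℝ) else 0) * (if (j:ℕ) ≤ k then (1:ℝ) else 0) else 0)) * d k := by
    have per : ∀ i j : Fin n, (if f (e i) ≠ f (e j) then min (q (e i)) (q (e j)) else 0)
        = ∑ k ∈ Finset.range n,
            (if g i ≠ g j then (if (i:ℕ) ≤ k then (1:ℝ) else 0) * (if (j:ℕ) ≤ k then (1:ℝ) else 0) else 0) * d k := by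
      intro i j
      by_cases hc : g i ≠ g j
      · rw [if_pos (show f (e i) ≠ f (e j) from hc)]
        have : min (q (e i)) (q (e j)) = min (r i) (r j) := rfl
        rw [this, hminR i j, htel _ (by have := max_lt i.isLt j.isLt; omega)]
        refine Finset.sum_congr rfl fun k _ => ?_
        rw [if_pos hc]
        by_cases h1 : (i:ℕ) ≤ k <;> by_cases h2 : (j:ℕ) ≤ k
        · rw [if_pos (by omega : max (i:ℕ) (j:ℕ) ≤ k), if_pos h1, if_pos h2]; ring
        · rw [if_neg (by omega : ¬ max (i:ℕ) (j:ℕ) ≤ k), if_pos h1, if_neg h2]; ring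
        · rw [if_neg (by omega : ¬ max (i:ℕ) (j:ℕ) ≤ k), if_neg h1, if_pos h2]; ring
        · rw [if_neg (by omega : ¬ max (i:ℕ) (j:ℕ) ≤ k), if_neg h1, if_neg h2]; ring
      · rw [if_neg (show ¬ f (e i) ≠ f (e j) from hc)]
        refine (Finset.sum_eq_zero fun k _ => ?_).symm
        rw [if_neg hc, zero_mul]
    simp only [per]
    calc ∑ i : Fin n, ∑ j : Fin n, ∑ k ∈ Finset.range n,
            (if g i ≠ g j then (if (i:ℕ) ≤ k then (1:ℝ) else 0) * (if (j:ℕ) ≤ k then (1:ℝ) else 0) else 0) * d k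
        = ∑ i : Fin n, ∑ k ∈ Finset.range n, ∑ j : Fin n,
            (if g i ≠ g j then (if (i:ℕ) ≤ k then (1:ℝ) else 0) * (if (j:ℕ) ≤ k then (1:ℝ) else 0) else 0) * d k :=
          Finset.sum_congr rfl fun i _ => Finset.sum_comm
      _ = ∑ k ∈ Finset.range n, ∑ i : Fin n, ∑ j : Fin n,
            (if g i ≠ g j then (if (i:ℕ) ≤ k then (1:ℝ) else 0) * (if (j:ℕ) ≤ k then (1:ℝ) else 0) else 0) * d k :=
          Finset.sum_comm
      _ = ∑ k ∈ Finset.range n, (∑ i : Fin n, ∑ j : Fin n,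
            (if g i ≠ g j then (if (i:ℕ) ≤ k then (1:ℝ) else 0) * (if (j:ℕ) ≤ k then (1:ℝ) else 0) else 0)) * d k := by
          refine Finset.sum_congr rfl fun k _ => ?_
          rw [Finset.sum_mul]
          exact Finset.sum_congr rfl fun i _ => by rw [Finset.sum_mul]
  rw [step1]
  have hC : ∑ i : Fin n, ∑ j : Fin n, (if f (e i) ≠ f (e j) then (1:ℝ) else 0)
      = ∑ p ∈ (Finset.univ : Finset O).offDiag,
          (∑ i : Fin n, if g i = p.1 then (1:ℝ) else 0) *
          (∑ j : Fin n, if g j = p.2 then (1:ℝ) else 0) := by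
    rw [← cross_count_eq g (fun _ => (1:ℝ))]
    refine Finset.sum_congr rfl fun i _ => Finset.sum_congr rfl fun j _ => ?_
    by_cases h : g i ≠ g j
    · rw [if_pos h, if_pos (show f (e i) ≠ f (e j) from h), one_mul]
    · rw [if_neg h, if_neg (show ¬ f (e i) ≠ f (e j) from h)]
  have hsum_r : ∑ i : Fin n, r i = ∑ k ∈ Finset.range n, ((k:ℝ)+1) * d k := by
    have h4 : ∀ i : Fin n, r i = ∑ k ∈ Finset.range n, (if (i:ℕ) ≤ k then d k else 0) := by
      intro i; rw [← htel _ i.isLt, hRfin]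
    simp only [h4]
    rw [Finset.sum_comm]
    refine Finset.sum_congr rfl fun k hk => ?_
    have hkn : k < n := Finset.mem_range.1 hk
    have h5 : ∀ i : Fin n, (if (i:ℕ) ≤ k then d k else 0)
        = (if (i:ℕ) ≤ k then (1:ℝ) else 0) * d k := by
      intro i; split <;> ring
    simp only [h5]
    rw [← Finset.sum_mul, count_le n k hkn]
  rw [hC, hsum_r, Finset.sum_div, Finset.sum_mul]
  refine Finset.sum_le_sum fun k hk => ?_
  have hkn : k < n := Finset.mem_range.1 hk
  have hn0 : (0:ℝ) < n := by
    have : 0 < n := by omega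
    exact_mod_cast this
  set aa : O → ℝ := fun o => ∑ i : Fin n, if g i = o then (if (i:ℕ) ≤ k then (1:ℝ) else 0) else 0 with haa
  set nnf : O → ℝ := fun o => ∑ i : Fin n, if g i = o then (1:ℝ) else 0 with hnnf
  have key := multipartite_ind (Finset.univ : Finset O) aa nnf
    (fun o => Finset.sum_nonneg fun i _ => by
      by_cases h : g i = o
      · rw [if_pos h]; split <;> norm_num
      · rw [if_neg h])
    (fun o => Finset.sum_le_sum fun i _ => by
      by_cases h : g i = o
      · rw [if_pos h, if_pos h]; split <;> norm_num
      · rw [if_neg h, if_neg h])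
  have hN : ∑ o : O, nnf o = (n:ℝ) := by
    simp only [hnnf]
    rw [Finset.sum_comm]
    simp
  have hA : ∑ o : O, aa o = (k:ℝ)+1 := by
    simp only [haa]
    rw [Finset.sum_comm]
    have h6 : ∀ i : Fin n, ∑ o : O, (if g i = o then (if (i:ℕ) ≤ k then (1:ℝ) else 0) else 0)
        = (if (i:ℕ) ≤ k then (1:ℝ) else 0) := by
      intro i
      simp
    simp only [h6]
    exact count_le n k hkn
  rw [hN, hA] at key
  have hW : ∑ i : Fin n, ∑ j : Fin n,
        (if g i ≠ g j then (if (i:ℕ) ≤ k then (1:ℝ) else 0) * (if (j:ℕ) ≤ k then (1:ℝ) else 0) else 0)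
      = ∑ p ∈ (Finset.univ : Finset O).offDiag, aa p.1 * aa p.2 :=
    cross_count_eq g _
  rw [hW]
  set W := ∑ p ∈ (Finset.univ : Finset O).offDiag, aa p.1 * aa p.2 with hWd
  set C := ∑ p ∈ (Finset.univ : Finset O).offDiag, nnf p.1 * nnf p.2 with hCd
  have hd := hd0 k
  have h7 : W * d k * n ≤ ((k:ℝ)+1) * d k * C := by
    nlinarith [mul_le_mul_of_nonneg_right key hd]
  calc W * d k = (W * d k * n) / n := by field_simp
    _ ≤ (((k:ℝ)+1) * d k * C) / n :=
        div_le_div_of_nonneg_right h7 hn0.le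
    _ = ((k:ℝ)+1) * d k / n * C := by ring

end Core

section Final

lemma unifAt_nonneg [Fintype Hi] [DecidableEq Li] (ℓ' : Li) (a : Hi × Li) :
    0 ≤ unifAt ℓ' a := by
  unfold unifAt
  split
  · positivity
  · exact le_refl _

lemma GE_unifAt [Fintype Hi] [Fintype Li] [Fintype Oi] [DecidableEq Li] [DecidableEq Oi]
    (M : Hi × Li → Oi) (ℓ' : Li) :
    GE M (unifAt ℓ') = 2⁻¹ * ((Fintype.card Hi : ℝ)⁻¹ *
      ∑ x : Hi, ∑ y : Hi, (if M (x,ℓ') ≠ M (y,ℓ') then (1:ℝ) else 0)) := by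
  rw [GE_eq M _ (unifAt_nonneg ℓ')]
  rw [Finset.sum_eq_single ℓ']
  · have h1 : ∀ x y : Hi,
        (if M (x,ℓ') ≠ M (y,ℓ') then min (unifAt ℓ' (x,ℓ')) (unifAt ℓ' (y,ℓ')) else 0)
        = (Fintype.card Hi : ℝ)⁻¹ * (if M (x,ℓ') ≠ M (y,ℓ') then (1:ℝ) else 0) := by
      intro x y
      by_cases h : M (x,ℓ') ≠ M (y,ℓ') <;> simp [unifAt, h, min_self]
    simp only [h1, ← Finset.mul_sum]
  · intro ℓ _ hℓ
    have h2 : ∀ x y : Hi,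
        (if M (x,ℓ) ≠ M (y,ℓ) then min (unifAt ℓ' (x,ℓ)) (unifAt ℓ' (y,ℓ)) else 0) = 0 := by
      intro x y
      simp only [unifAt, if_neg hℓ, min_self]
      split <;> rfl
    simp only [h2, Finset.sum_const_zero, mul_zero]
  · intro h
    exact absurd (Finset.mem_univ ℓ') h

theorem maxGE_eq_max_unifAt
    [Fintype Hi] [Fintype Li] [Fintype Oi] [DecidableEq Li] [DecidableEq Oi]
    [Nonempty Hi] [Nonempty Li]
    (M : Hi × Li → Oi) :
    sSup {x : ℝ | ∃ μ : Hi × Li → ℝ, (∀ a, 0 ≤ μ a) ∧ (∑ a, μ a = 1) ∧ x = GE M μ} =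
      Finset.univ.sup' Finset.univ_nonempty (fun ℓ' : Li => GE M (unifAt ℓ')) := by
  classical
  set S := Finset.univ.sup' Finset.univ_nonempty (fun ℓ' : Li => GE M (unifAt ℓ')) with hS
  have hcard : (0:ℝ) < (Fintype.card Hi : ℝ) := by
    have : 0 < Fintype.card Hi := Fintype.card_pos
    exact_mod_cast this
  have hub : ∀ μ : Hi × Li → ℝ, (∀ a, 0 ≤ μ a) → (∑ a, μ a = 1) → GE M μ ≤ S := by
    intro μ hμ hsum
    rw [GE_eq M μ hμ]
    have hμsum : ∑ ℓ : Li, ∑ h : Hi, μ (h, ℓ) = 1 := by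
      rw [← hsum, Fintype.sum_prod_type]
      exact Finset.sum_comm
    have step : ∀ ℓ : Li, 2⁻¹ * (∑ x : Hi, ∑ y : Hi,
          (if M (x,ℓ) ≠ M (y,ℓ) then min (μ (x,ℓ)) (μ (y,ℓ)) else 0))
        ≤ (∑ h : Hi, μ (h,ℓ)) * GE M (unifAt ℓ) := by
      intro ℓ
      have h1 := cross_min_le (fun h : Hi => M (h,ℓ)) (fun h : Hi => μ (h,ℓ))
        (fun h => hμ _)
      rw [GE_unifAt M ℓ]
      rw [div_eq_mul_inv] at h1
      set D := ∑ x : Hi, ∑ y : Hi, (if M (x,ℓ) ≠ M (y,ℓ) then (1:ℝ) else 0) with hD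
      have hD0 : 0 ≤ D := Finset.sum_nonneg fun x _ => Finset.sum_nonneg fun y _ => by
        split <;> norm_num
      nlinarith [h1]
    calc ∑ ℓ : Li, 2⁻¹ * (∑ x : Hi, ∑ y : Hi,
          (if M (x,ℓ) ≠ M (y,ℓ) then min (μ (x,ℓ)) (μ (y,ℓ)) else 0))
        ≤ ∑ ℓ : Li, (∑ h : Hi, μ (h,ℓ)) * GE M (unifAt ℓ) :=
          Finset.sum_le_sum fun ℓ _ => step ℓ
      _ ≤ ∑ ℓ : Li, (∑ h : Hi, μ (h,ℓ)) * S := by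
          refine Finset.sum_le_sum fun ℓ _ => ?_
          refine mul_le_mul_of_nonneg_left ?_ (Finset.sum_nonneg fun h _ => hμ _)
          rw [hS]
          exact Finset.le_sup' (fun ℓ' : Li => GE M (unifAt ℓ')) (Finset.mem_univ ℓ)
      _ = S := by rw [← Finset.sum_mul, hμsum, one_mul]
  obtain ⟨ℓ₀, -, hℓ₀⟩ := Finset.exists_mem_eq_sup' Finset.univ_nonempty
    (fun ℓ' : Li => GE M (unifAt ℓ'))
  have hmem : S ∈ {x : ℝ | ∃ μ : Hi × Li → ℝ, (∀ a, 0 ≤ μ a) ∧ (∑ a, μ a = 1) ∧ x = GE M μ} := by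
    refine ⟨unifAt ℓ₀, unifAt_nonneg ℓ₀, ?_, hℓ₀⟩
    rw [Fintype.sum_prod_type]
    have : ∀ h : Hi, ∑ ℓ : Li, unifAt ℓ₀ (h, ℓ) = (Fintype.card Hi : ℝ)⁻¹ := by
      intro h
      simp [unifAt]
    simp only [this, Finset.sum_const, Finset.card_univ, nsmul_eq_mul]
    field_simp
  exact IsGreatest.csSup_eq ⟨hmem, fun x hx => by
    obtain ⟨μ, h1, h2, h3⟩ := hx
    exact h3 ▸ hub μ h1 h2⟩

end Final
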